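/- Let M be a maximal subalgebra of the Lie algebra W_2 = Der_K(K[x,y]) with rk_A(M) = 1, i.e., M ≠ 0 and any two elements of M are linearly dependent over A = K[x,y]. Then there exists a simple derivation D of A such that M = A·D = { f·D : f ∈ A }. -/

import Mathlib

open MvPolynomial

/-- `W2 K` is the Lie algebra of all `K`-derivations of `K[x, y]`. -/
abbrev W2 (K : Type) [Field K] :=
  Derivation K (MvPolynomial (Fin 2) K) (MvPolynomial (Fin 2) K)

namespace AuxW2
variable {K : Type} [Field K]

local notation "A" => MvPolynomial (Fin 2) K

lemma smul_apply (f : A) (D : W2 K) (g : A) : (f • D) g = f * D g := rfl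

lemma ext2 {D₁ D₂ : W2 K} (h0 : D₁ (X 0) = D₂ (X 0)) (h1 : D₁ (X 1) = D₂ (X 1)) :
    D₁ = D₂ := by
  apply derivation_ext
  intro i
  fin_cases i <;> assumption

lemma chain (E : W2 K) (g : A) :
    E g = E (X 0) * pderiv 0 g + E (X 1) * pderiv 1 g := by
  have h : E = E (X 0) • (pderiv 0 : W2 K) + E (X 1) • (pderiv 1 : W2 K) := by
    apply ext2 <;> simp [smul_apply, Derivation.add_apply, pderiv_X]
  conv_lhs => rw [h]
  rfl

lemma bracket_smul (f g : A) (D : W2 K) :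
    ⁅f • D, g • D⁆ = (f * D g - g * D f) • D := by
  apply Derivation.ext
  intro w
  rw [Derivation.commutator_apply]
  simp only [smul_apply, Derivation.leibniz, smul_eq_mul, map_mul]
  ring

/-- `A·D` as a Lie subalgebra of `W2 K`. -/
def aD (D : W2 K) : LieSubalgebra K (W2 K) where
  carrier := {T | ∃ f : A, f • D = T}
  add_mem' := by
    rintro _ _ ⟨f, rfl⟩ ⟨g, rfl⟩
    exact ⟨f + g, add_smul f g D⟩
  zero_mem' := ⟨0, zero_smul _ _⟩
  smul_mem' := by
    rintro c _ ⟨f, rfl⟩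
    refine ⟨C c * f, ?_⟩
    apply ext2 <;>
      simp [smul_apply, Derivation.smul_apply, smul_eq_C_mul, mul_assoc]
  lie_mem' := by
    rintro _ _ ⟨f, rfl⟩ ⟨g, rfl⟩
    exact ⟨f * D g - g * D f, (bracket_smul f g D).symm⟩

lemma mem_aD {D T : W2 K} : T ∈ aD D ↔ ∃ f : A, f • D = T := Iff.rfl

lemma coe_aD (D : W2 K) : (aD D : Set (W2 K)) = {T | ∃ f : A, f • D = T} := rfl

lemma smul_eq_coord {D E : W2 K} {f : A} (h : f • D = E) (i : Fin 2) :
    f * D (X i) = E (X i) := by rw [← h]; rfl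

/-- The subalgebra of derivations congruent to some `f • D` modulo a
`D`-invariant ideal `I`. -/
def LI (D : W2 K) (I : Ideal A) (hI : ∀ f ∈ I, D f ∈ I) : LieSubalgebra K (W2 K) where
  carrier := {T | ∃ f : A, ∀ w : A, T w - f * D w ∈ I}
  zero_mem' := ⟨0, fun w => by simp⟩
  add_mem' := by
    rintro T S ⟨f, hf⟩ ⟨g, hg⟩
    refine ⟨f + g, fun w => ?_⟩
    have h : (T + S) w - (f + g) * D w = (T w - f * D w) + (S w - g * D w) := by
      rw [Derivation.add_apply]; ring
    rw [h]; exact I.add_mem (hf w) (hg w)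
  smul_mem' := by
    rintro c T ⟨f, hf⟩
    refine ⟨C c * f, fun w => ?_⟩
    have h : (c • T) w - C c * f * D w = C c * (T w - f * D w) := by
      rw [Derivation.smul_apply, smul_eq_C_mul]; ring
    rw [h]; exact I.mul_mem_left _ (hf w)
  lie_mem' := by
    rintro T S ⟨f, hf⟩ ⟨g, hg⟩
    refine ⟨f * D g - g * D f, fun w => ?_⟩
    have c1 := hf (S w)
    have c2 := hg (T w)
    have c3 : D (S w - g * D w) ∈ I := hI _ (hg w)
    have c4 : D (T w - f * D w) ∈ I := hI _ (hf w)
    have e3 : D (S w - g * D w) = D (S w) - (g * D (D w) + D w * D g) := by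
      rw [map_sub, Derivation.leibniz]; simp [smul_eq_mul]
    have e4 : D (T w - f * D w) = D (T w) - (f * D (D w) + D w * D f) := by
      rw [map_sub, Derivation.leibniz]; simp [smul_eq_mul]
    rw [e3] at c3; rw [e4] at c4
    have key : ⁅T, S⁆ w - (f * D g - g * D f) * D w
        = ((T (S w) - f * D (S w)) - (S (T w) - g * D (T w)))
          + f * (D (S w) - (g * D (D w) + D w * D g))
          - g * (D (T w) - (f * D (D w) + D w * D f)) := by
      rw [Derivation.commutator_apply]; ring
    rw [key]
    exact I.sub_mem (I.add_mem (I.sub_mem c1 c2) (I.mul_mem_left _ c3))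
      (I.mul_mem_left _ c4)

lemma mem_LI {D : W2 K} {I : Ideal A} {hI : ∀ f ∈ I, D f ∈ I} {T : W2 K} :
    T ∈ LI D I hI ↔ ∃ f : A, ∀ w : A, T w - f * D w ∈ I := Iff.rfl

end AuxW2

set_option maxHeartbeats 1600000 in
open AuxW2 in
/-- Every maximal Lie subalgebra `M` of `W₂` of rank `1` over `A = K[x, y]`
(`M ≠ 0` and any two of its elements are `A`-linearly dependent) is of the form
`M = A·D` for some simple derivation `D` of `A`. -/
theorem maximal_rank_one_subalgebra_eq_aD
    {K : Type} [Field K] [IsAlgClosed K] [CharZero K]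
    (M : LieSubalgebra K (W2 K))
    (hM0 : M ≠ ⊥) (hMtop : M ≠ ⊤)
    (hmax : ∀ L : LieSubalgebra K (W2 K), M < L → L = ⊤)
    (hrk : ∀ v : Fin 2 → W2 K, (∀ i, v i ∈ M) →
      ¬ LinearIndependent (MvPolynomial (Fin 2) K) v) :
    ∃ D : W2 K,
      (∀ I : Ideal (MvPolynomial (Fin 2) K), (∀ f ∈ I, D f ∈ I) → I = ⊥ ∨ I = ⊤) ∧
      (M : Set (W2 K)) = {T | ∃ f : MvPolynomial (Fin 2) K, f • D = T} := by
  classical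
  -- a nonzero element of M
  obtain ⟨T, hTM, hT0⟩ : ∃ T ∈ M, T ≠ 0 := by
    by_contra hc
    push_neg at hc
    refine hM0 ?_
    ext x
    simp only [LieSubalgebra.mem_bot]
    exact ⟨fun hx => hc x hx, by rintro rfl; exact M.zero_mem⟩
  -- the determinant of any two elements of M vanishes
  have hdet : ∀ S ∈ M, ∀ T' ∈ M, S (X 0) * T' (X 1) = S (X 1) * T' (X 0) := by
    intro S hS T' hT'
    have hni := hrk ![S, T'] (fun i => by fin_cases i <;> simpa)
    rw [LinearIndependent.pair_iff] at hni
    push_neg at hni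
    obtain ⟨s, t, hst, hne⟩ := hni
    have h0 : s * S (X 0) + t * T' (X 0) = 0 := by
      have := congrArg (fun E : W2 K => E (X 0)) hst
      simpa [Derivation.add_apply, AuxW2.smul_apply] using this
    have h1 : s * S (X 1) + t * T' (X 1) = 0 := by
      have := congrArg (fun E : W2 K => E (X 1)) hst
      simpa [Derivation.add_apply, AuxW2.smul_apply] using this
    by_cases hs : s = 0
    · have ht : t ≠ 0 := hne hs
      have h2 : t * (S (X 0) * T' (X 1) - S (X 1) * T' (X 0)) = 0 := by
        linear_combination S (X 0) * h1 - S (X 1) * h0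
      rcases mul_eq_zero.1 h2 with h | h
      · exact absurd h ht
      · exact sub_eq_zero.1 h
    · have h2 : s * (S (X 0) * T' (X 1) - S (X 1) * T' (X 0)) = 0 := by
        linear_combination T' (X 1) * h0 - T' (X 0) * h1
      rcases mul_eq_zero.1 h2 with h | h
      · exact absurd h hs
      · exact sub_eq_zero.1 h
  -- construct D such that every element of M is an A-multiple of D
  obtain ⟨D, hD⟩ : ∃ D : W2 K,
      ∀ S ∈ M, ∃ h : MvPolynomial (Fin 2) K, S (X 0) = h * D (X 0) ∧ S (X 1) = h * D (X 1) := by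
    by_cases hu : T (X 0) = 0
    · -- T = v ∂y with v ≠ 0 ; D := ∂y
      have hv : T (X 1) ≠ 0 := by
        intro hv
        exact hT0 (by apply ext2 <;> simp [hu, hv])
      refine ⟨mkDerivation K ![0, 1], fun S hS => ?_⟩
      have h := hdet S hS T hTM
      rw [hu, mul_zero] at h
      have hS0 : S (X 0) = 0 := by
        rcases mul_eq_zero.1 h with h' | h'
        · exact h'
        · exact absurd h' hv
      exact ⟨S (X 1), by simp [hS0], by simp⟩
    · -- reduce the coordinates of T by their gcd
      obtain ⟨p, q, d, hpq, hdp, hdq⟩ :=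
        UniqueFactorizationMonoid.exists_reduced_factors (T (X 0)) hu (T (X 1))
      have hd : d ≠ 0 := fun h => hu (by rw [← hdp, h, zero_mul])
      have hp : p ≠ 0 := fun h => hu (by rw [← hdp, h, mul_zero])
      refine ⟨mkDerivation K ![p, q], fun S hS => ?_⟩
      have h := hdet S hS T hTM
      rw [← hdp, ← hdq] at h
      have h' : S (X 0) * q = S (X 1) * p := by
        apply mul_left_cancel₀ hd
        linear_combination h
      have hpd : p ∣ S (X 0) := by
        refine hpq.dvd_of_dvd_mul_right (y := S (X 0)) ?_
        rw [h']
        exact dvd_mul_left p (S (X 1))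
      obtain ⟨h₀, hh₀⟩ := hpd
      have hS1 : S (X 1) = h₀ * q := by
        apply mul_left_cancel₀ hp
        linear_combination q * hh₀ - h'
      exact ⟨h₀, by rw [hh₀]; simp [mul_comm], by rw [hS1]; simp [mul_comm]⟩
  have hle : M ≤ aD D := by
    intro S hS
    obtain ⟨h, h0, h1⟩ := hD S hS
    exact mem_aD.2 ⟨h, (ext2 (by simp [AuxW2.smul_apply, h0]) (by simp [AuxW2.smul_apply, h1])).symm⟩
  -- M = A·D (A·D is proper since W₂ has rank 2)
  have hMD : M = aD D := by
    rcases hle.lt_or_eq with hlt | heq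
    · exfalso
      have htop := hmax _ hlt
      have hx : (pderiv 0 : W2 K) ∈ aD D := by rw [htop]; exact LieSubalgebra.mem_top _
      have hy : (pderiv 1 : W2 K) ∈ aD D := by rw [htop]; exact LieSubalgebra.mem_top _
      obtain ⟨f, hf⟩ := mem_aD.1 hx
      obtain ⟨g, hg⟩ := mem_aD.1 hy
      have e1 : f * D (X 0) = 1 := by
        simpa using smul_eq_coord hf 0
      have e2 : f * D (X 1) = 0 := by
        simpa using smul_eq_coord hf 1
      have e3 : g * D (X 0) = 0 := by
        simpa using smul_eq_coord hg 0
      have e4 : g * D (X 1) = 1 := by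
        simpa using smul_eq_coord hg 1
      have : (1 : MvPolynomial (Fin 2) K) = 0 := by
        linear_combination (-(g * D (X 1))) * e1 - e4 + (g * D (X 0)) * e2
      exact one_ne_zero this
    · exact heq
  refine ⟨D, ?_, by rw [hMD]; exact coe_aD D⟩
  -- simplicity of D
  intro I hI
  by_contra hc
  push_neg at hc
  obtain ⟨hIbot, hItop⟩ := hc
  obtain ⟨a, haI, ha0⟩ := Submodule.exists_mem_ne_zero_of_ne_bot hIbot
  -- M ≤ LI D I hI
  have hle' : M ≤ LI D I hI := by
    intro S hS
    rw [hMD] at hS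
    obtain ⟨f, rfl⟩ := hS
    exact mem_LI.2 ⟨f, fun w => by rw [AuxW2.smul_apply, sub_self]; exact I.zero_mem⟩
  -- the derivations a∂x and a∂y belong to LI D I hI
  have hax : mkDerivation K ![a, 0] ∈ LI D I hI := by
    refine mem_LI.2 ⟨0, fun w => ?_⟩
    rw [zero_mul, sub_zero, chain]
    simp only [mkDerivation_X, Matrix.cons_val_zero, Matrix.cons_val_one, Matrix.head_cons]
    rw [zero_mul, add_zero]
    exact I.mul_mem_right _ haI
  have hay : mkDerivation K ![0, a] ∈ LI D I hI := by
    refine mem_LI.2 ⟨0, fun w => ?_⟩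
    rw [zero_mul, sub_zero, chain]
    simp only [mkDerivation_X, Matrix.cons_val_zero, Matrix.cons_val_one, Matrix.head_cons]
    rw [zero_mul, zero_add]
    exact I.mul_mem_right _ haI
  -- M < LI D I hI, hence LI D I hI = ⊤
  have hne : M ≠ LI D I hI := by
    intro hEq
    have hx : mkDerivation K ![a, 0] ∈ M := by rw [hEq]; exact hax
    have hy : mkDerivation K ![0, a] ∈ M := by rw [hEq]; exact hay
    rw [hMD] at hx hy
    obtain ⟨f, hf⟩ := mem_aD.1 hx
    obtain ⟨g, hg⟩ := mem_aD.1 hy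
    have e1 : f * D (X 0) = a := by
      simpa using smul_eq_coord hf 0
    have e2 : f * D (X 1) = 0 := by
      simpa using smul_eq_coord hf 1
    have e3 : g * D (X 0) = 0 := by
      simpa using smul_eq_coord hg 0
    have e4 : g * D (X 1) = a := by
      simpa using smul_eq_coord hg 1
    rcases mul_eq_zero.1 e2 with h | h
    · exact ha0 (by rw [← e1, h, zero_mul])
    · exact ha0 (by rw [← e4, h, mul_zero])
  have htop := hmax _ (lt_of_le_of_ne hle' hne)
  -- ∂x, ∂y ∈ LI D I hI forces 1 ∈ I
  have hx : (pderiv 0 : W2 K) ∈ LI D I hI := by rw [htop]; exact LieSubalgebra.mem_top _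
  have hy : (pderiv 1 : W2 K) ∈ LI D I hI := by rw [htop]; exact LieSubalgebra.mem_top _
  obtain ⟨f, hf⟩ := mem_LI.1 hx
  obtain ⟨g, hg⟩ := mem_LI.1 hy
  have m1 : 1 - f * D (X 0) ∈ I := by simpa using hf (X 0)
  have m2 : (0 : MvPolynomial (Fin 2) K) - f * D (X 1) ∈ I := by simpa using hf (X 1)
  have m3 : (0 : MvPolynomial (Fin 2) K) - g * D (X 0) ∈ I := by simpa using hg (X 0)
  have m4 : 1 - g * D (X 1) ∈ I := by simpa using hg (X 1)
  have hone : (1 : MvPolynomial (Fin 2) K) ∈ I := by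
    have e : (1 : MvPolynomial (Fin 2) K) = (1 - f * D (X 0)) + (f * D (X 0)) * (1 - g * D (X 1)) +
        (-((0 : MvPolynomial (Fin 2) K) - f * D (X 1))) * (-((0 : MvPolynomial (Fin 2) K) - g * D (X 0))) := by ring
    rw [e]
    exact I.add_mem (I.add_mem m1 (I.mul_mem_left _ m4))
      (I.mul_mem_left _ (I.neg_mem m3))
  exact hItop ((Ideal.eq_top_iff_one I).2 hone)
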